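/- Let m ≥ 3 and ε ∈ 𝔽₂. The subgroup of the group of 𝔽₂-linear automorphisms of V = 𝔽₂^{2m} generated by the transvections t_{a+b}, where a and b range over all distinct vectors with θ₀(a) = θ₀(b) = ε, is exactly the full symplectic group {g : φ(g(u), g(v)) = φ(u,v) for all u, v ∈ V} ≅ Sp_{2m}(2). (This is the group L(D^ε) = L_∞(D^ε) of move sequences of the design D^ε, since the elementary move [θ_a, θ_b] is induced by t_{a+b}.) -/

import Mathlib

open Matrix

/-- Row vectors in `𝔽₂^{2m}`, with coordinates indexed by `Fin m ⊕ Fin m`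
(the first block and the second block of `m` coordinates). -/
abbrev Vm (m : ℕ) := (Fin m ⊕ Fin m) → ZMod 2

/-- The block matrix `e = (0 Iₘ; 0 0)`. -/
def eMat (m : ℕ) : Matrix (Fin m ⊕ Fin m) (Fin m ⊕ Fin m) (ZMod 2) :=
  Matrix.fromBlocks 0 1 0 0

/-- The block matrix `f = e + eᵀ = (0 Iₘ; Iₘ 0)`. -/
def fMat (m : ℕ) : Matrix (Fin m ⊕ Fin m) (Fin m ⊕ Fin m) (ZMod 2) :=
  eMat m + (eMat m)ᵀ

/-- The alternating bilinear form `φ(u,v) = u f vᵀ`. -/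
def phi (m : ℕ) (u v : Vm m) : ZMod 2 := u ⬝ᵥ (fMat m).mulVec v

/-- The quadratic form `θ₀(u) = u e uᵀ`. -/
def theta0 (m : ℕ) (u : Vm m) : ZMod 2 := u ⬝ᵥ (eMat m).mulVec u

/-- The quadratic form `θ_a(u) = θ₀(u) + φ(u,a)`. -/
def theta (m : ℕ) (a u : Vm m) : ZMod 2 := theta0 m u + phi m u a

/-- The transvection `t_c : u ↦ u + φ(u,c)·c`. -/
def tvec (m : ℕ) (c u : Vm m) : Vm m := u + phi m u c • c

variable {m : ℕ}

lemma phi_eq (u v : Vm m) : phi m u v =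
    ∑ i : Fin m, (u (Sum.inl i) * v (Sum.inr i) + u (Sum.inr i) * v (Sum.inl i)) := by
  simp [phi, fMat, eMat, dotProduct, mulVec, Fintype.sum_sum_type, Matrix.fromBlocks,
    Matrix.one_apply, Finset.mul_sum, Finset.sum_ite_eq', mul_comm, mul_add, Finset.sum_add_distrib]

lemma theta0_eq (u : Vm m) : theta0 m u = ∑ i : Fin m, u (Sum.inl i) * u (Sum.inr i) := by
  simp [theta0, eMat, dotProduct, mulVec, Fintype.sum_sum_type, Matrix.fromBlocks,
    Matrix.one_apply, Finset.mul_sum, Finset.sum_ite_eq', mul_comm]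

lemma zmod2_cases (x : ZMod 2) : x = 0 ∨ x = 1 := by revert x; decide

lemma phi_add_left (u v w : Vm m) : phi m (u + v) w = phi m u w + phi m v w := by
  simp [phi, add_dotProduct]
lemma phi_add_right (u v w : Vm m) : phi m u (v + w) = phi m u v + phi m u w := by
  simp [phi, mulVec_add, dotProduct_add]
lemma phi_smul_left (r : ZMod 2) (u w : Vm m) : phi m (r • u) w = r * phi m u w := by
  simp [phi, smul_dotProduct, smul_eq_mul]
lemma phi_smul_right (r : ZMod 2) (u w : Vm m) : phi m u (r • w) = r * phi m u w := by
  simp [phi, mulVec_smul, dotProduct_smul, smul_eq_mul]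

lemma phi_self (u : Vm m) : phi m u u = 0 := by
  rw [phi_eq]
  refine Finset.sum_eq_zero fun i _ => ?_
  have : u (Sum.inl i) * u (Sum.inr i) + u (Sum.inr i) * u (Sum.inl i)
      = u (Sum.inl i) * u (Sum.inr i) + u (Sum.inl i) * u (Sum.inr i) := by ring
  rw [this, CharTwo.add_self_eq_zero]

lemma phi_comm (u v : Vm m) : phi m u v = phi m v u := by
  rw [phi_eq, phi_eq]
  refine Finset.sum_congr rfl fun i _ => ?_
  ring

lemma phi_zero_left (w : Vm m) : phi m 0 w = 0 := by simp [phi]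
lemma phi_zero_right (w : Vm m) : phi m w 0 = 0 := by simp [phi]

/-- standard basis vectors -/
def Ev (m : ℕ) (i : Fin m) : Vm m := Pi.single (Sum.inl i) 1
def Fv (m : ℕ) (i : Fin m) : Vm m := Pi.single (Sum.inr i) 1

lemma phi_Ev (w : Vm m) (i : Fin m) : phi m w (Ev m i) = w (Sum.inr i) := by
  rw [phi_eq]
  simp [Ev, Pi.single_apply, Finset.sum_ite_eq', mul_comm]
lemma phi_Fv (w : Vm m) (i : Fin m) : phi m w (Fv m i) = w (Sum.inl i) := by
  rw [phi_eq]
  simp [Fv, Pi.single_apply, Finset.sum_ite_eq', mul_comm]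

lemma add_self_vm (u : Vm m) : u + u = 0 := by
  funext i; exact CharTwo.add_self_eq_zero _

lemma tvec_tvec (c u : Vm m) : tvec m c (tvec m c u) = u := by
  unfold tvec
  rw [phi_add_left, phi_smul_left, phi_self, mul_zero, add_zero, add_assoc,
    ← add_smul, CharTwo.add_self_eq_zero, zero_smul, add_zero]

lemma phi_tvec (c u v : Vm m) : phi m (tvec m c u) (tvec m c v) = phi m u v := by
  unfold tvec
  rw [phi_add_left, phi_add_right, phi_add_right, phi_smul_left, phi_smul_right,
    phi_smul_right, phi_smul_left, phi_self, phi_comm v c]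
  have h2 : (2 : ZMod 2) = 0 := by decide
  ring_nf
  rw [h2]
  ring

/-- transvection as permutation -/
def tperm (m : ℕ) (c : Vm m) : Equiv.Perm (Vm m) :=
  ⟨tvec m c, tvec m c, tvec_tvec c, tvec_tvec c⟩

lemma tperm_apply (c u : Vm m) : tperm m c u = tvec m c u := rfl

lemma tvec_linear (c : Vm m) : IsLinearMap (ZMod 2) (tvec m c) := by
  constructor
  · intro u v
    unfold tvec
    rw [phi_add_left, add_smul]
    abel
  · intro r u
    unfold tvec
    rw [phi_smul_left, mul_smul, smul_add]

/-- The symplectic group as a subgroup of permutations. -/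
def Sp (m : ℕ) : Subgroup (Equiv.Perm (Vm m)) where
  carrier := {g | IsLinearMap (ZMod 2) (fun u : Vm m => g u) ∧
      ∀ u v : Vm m, phi m (g u) (g v) = phi m u v}
  one_mem' := by
    refine ⟨⟨fun u v => rfl, fun r u => rfl⟩, fun u v => rfl⟩
  mul_mem' := by
    rintro a b ⟨ha1, ha2⟩ ⟨hb1, hb2⟩
    refine ⟨⟨fun u v => ?_, fun r u => ?_⟩, fun u v => ?_⟩
    · simp only [Equiv.Perm.mul_apply, hb1.map_add, ha1.map_add]
    · simp only [Equiv.Perm.mul_apply, hb1.map_smul, ha1.map_smul]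
    · simp only [Equiv.Perm.mul_apply, ha2, hb2]
  inv_mem' := by
    rintro g ⟨h1, h2⟩
    have hinj : Function.Injective g := g.injective
    refine ⟨⟨fun u v => ?_, fun r u => ?_⟩, fun u v => ?_⟩
    · apply hinj
      rw [(show ∀ x, g (g⁻¹ x) = x from g.apply_symm_apply), h1.map_add, (show ∀ x, g (g⁻¹ x) = x from g.apply_symm_apply),
        (show ∀ x, g (g⁻¹ x) = x from g.apply_symm_apply)]
    · apply hinj
      rw [(show ∀ x, g (g⁻¹ x) = x from g.apply_symm_apply), h1.map_smul, (show ∀ x, g (g⁻¹ x) = x from g.apply_symm_apply)]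
    · conv_rhs => rw [← (show ∀ x, g (g⁻¹ x) = x from g.apply_symm_apply) u, ← (show ∀ x, g (g⁻¹ x) = x from g.apply_symm_apply) v, h2]

lemma tperm_mem_Sp (c : Vm m) : tperm m c ∈ Sp m :=
  ⟨tvec_linear c, phi_tvec c⟩

lemma sp_map_zero {g : Equiv.Perm (Vm m)} (hg : g ∈ Sp m) : g 0 = 0 := by
  have := hg.1.map_smul 0 0
  simpa using this

section EPS
variable (ε : ZMod 2)

/-- the generating set from the theorem -/
def Sset (m : ℕ) (ε : ZMod 2) : Set (Equiv.Perm (Vm m)) :=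
  {g | ∃ a b : Vm m, a ≠ b ∧ theta0 m a = ε ∧ theta0 m b = ε ∧
      ∀ u : Vm m, g u = tvec m (a + b) u}

def T (m : ℕ) (ε : ZMod 2) : Subgroup (Equiv.Perm (Vm m)) := Subgroup.closure (Sset m ε)

lemma Sset_subset_Sp : Sset m ε ⊆ (Sp m : Set (Equiv.Perm (Vm m))) := by
  rintro g ⟨a, b, -, -, -, hgu⟩
  have : g = tperm m (a + b) := Equiv.ext hgu
  rw [this]
  exact tperm_mem_Sp _

lemma T_le_Sp : T m ε ≤ Sp m := (Subgroup.closure_le _).2 (Sset_subset_Sp ε)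
end EPS

lemma theta0_add (u v : Vm m) :
    theta0 m (u + v) = theta0 m u + theta0 m v + phi m u v := by
  rw [theta0_eq, theta0_eq, theta0_eq, phi_eq, ← Finset.sum_add_distrib, ← Finset.sum_add_distrib]
  refine Finset.sum_congr rfl fun i _ => ?_
  simp only [Pi.add_apply]
  ring

lemma theta0_Ev (i : Fin m) : theta0 m (Ev m i) = 0 := by
  rw [theta0_eq]
  refine Finset.sum_eq_zero fun t _ => ?_
  simp [Ev, Pi.single_apply]
lemma theta0_Fv (i : Fin m) : theta0 m (Fv m i) = 0 := by
  rw [theta0_eq]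
  refine Finset.sum_eq_zero fun t _ => ?_
  simp [Fv, Pi.single_apply]

lemma phi_EvFv (i j : Fin m) : phi m (Ev m i) (Fv m j) = if i = j then 1 else 0 := by
  rw [phi_Fv]
  simp [Ev, Pi.single_apply, eq_comm]

lemma theta0_EvFv (k : Fin m) : theta0 m (Ev m k + Fv m k) = 1 := by
  rw [theta0_add, theta0_Ev, theta0_Fv, phi_EvFv]
  simp

lemma exists_da (hm : 2 ≤ m) (ε : ZMod 2) (c : Vm m) (hc : c ≠ 0) :
    ∃ d a' : Vm m, phi m d c = 1 ∧ theta0 m d = 0 ∧ theta0 m a' = ε ∧ phi m a' d = 0 := by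
  have hcard : 1 < Fintype.card (Fin m) := by simp; omega
  have hex : ∃ idx, c idx ≠ 0 := by
    by_contra h
    push_neg at h
    exact hc (funext fun idx => by simpa using h idx)
  obtain ⟨idx, hidx⟩ := hex
  have hone : c idx = 1 := by
    rcases zmod2_cases (c idx) with h | h
    · exact absurd h hidx
    · exact h
  have haux : ∀ j : Fin m, ∃ a' : Vm m, theta0 m a' = ε ∧
      a' (Sum.inl j) = 0 ∧ a' (Sum.inr j) = 0 := by
    intro j
    rcases zmod2_cases ε with hε | hε
    · exact ⟨0, by simp [theta0_eq, hε], rfl, rfl⟩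
    · obtain ⟨k, hk⟩ := Fintype.exists_ne_of_one_lt_card hcard j
      refine ⟨Ev m k + Fv m k, by rw [theta0_EvFv, hε], ?_, ?_⟩ <;>
        simp [Ev, Fv, Pi.single_apply, hk]
  rcases idx with j | j
  · -- c (inl j) = 1, take d = Fv j
    obtain ⟨a', ha1, ha2, ha3⟩ := haux j
    refine ⟨Fv m j, a', ?_, theta0_Fv j, ha1, ?_⟩
    · rw [phi_comm, phi_Fv, hone]
    · rw [phi_Fv, ha2]
  · obtain ⟨a', ha1, ha2, ha3⟩ := haux j
    refine ⟨Ev m j, a', ?_, theta0_Ev j, ha1, ?_⟩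
    · rw [phi_comm, phi_Ev, hone]
    · rw [phi_Ev, ha3]

lemma tperm_mem_T (hm : 2 ≤ m) (ε : ZMod 2) (c : Vm m) (hc : c ≠ 0) :
    tperm m c ∈ T m ε := by
  obtain ⟨d, a', hd1, hd2, ha1, ha2⟩ := exists_da hm ε c hc
  -- choose a with theta0 a = ε and phi a c = theta0 c
  have key : ∃ a : Vm m, theta0 m a = ε ∧ phi m a c = theta0 m c := by
    rcases eq_or_ne (phi m a' c) (theta0 m c) with h | h
    · exact ⟨a', ha1, h⟩
    · refine ⟨a' + d, ?_, ?_⟩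
      · rw [theta0_add, ha1, hd2, ha2, add_zero, add_zero]
      · rw [phi_add_left, hd1]
        revert h
        rcases zmod2_cases (phi m a' c) with h1 | h1 <;>
          rcases zmod2_cases (theta0 m c) with h2 | h2 <;> simp [h1, h2] <;> decide
  obtain ⟨a, ha, hac⟩ := key
  apply Subgroup.subset_closure
  refine ⟨a, a + c, ?_, ha, ?_, ?_⟩
  · intro h
    apply hc
    have := congrArg (fun x => a + x) h
    simpa [← add_assoc, add_self_vm] using this.symm
  · rw [theta0_add, ha, hac]
    have : theta0 m c + theta0 m c = 0 := CharTwo.add_self_eq_zero _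
    rw [add_assoc, this, add_zero]
  · intro u
    have : a + (a + c) = c := by rw [← add_assoc, add_self_vm, zero_add]
    rw [this]
    rfl

lemma add_eq_zero_vm {u v : Vm m} (h : u + v = 0) : u = v := by
  have := congrArg (fun x => u + x) h
  simpa [← add_assoc, add_self_vm] using this.symm

lemma ne_add_ne_zero {u v : Vm m} (h : u ≠ v) : u + v ≠ 0 := fun hc => h (add_eq_zero_vm hc)

lemma phi_ne_of_eq {u v : Vm m} (h : phi m u v = 1) : u ≠ v := by
  intro he
  rw [he, phi_self] at h
  exact one_ne_zero h.symm

lemma tvec_apply_one {c u : Vm m} (h : phi m u c = 1) : tvec m c u = u + c := by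
  rw [tvec, h, one_smul]
lemma tvec_apply_zero {c u : Vm m} (h : phi m u c = 0) : tvec m c u = u := by
  rw [tvec, h, zero_smul, add_zero]

/-- vanishing on the first `k` coordinate pairs -/
def suppK (m k : ℕ) (w : Vm m) : Prop :=
  ∀ i : Fin m, (i : ℕ) < k → w (Sum.inl i) = 0 ∧ w (Sum.inr i) = 0

lemma suppK_add {k : ℕ} {u v : Vm m} (hu : suppK m k u) (hv : suppK m k v) :
    suppK m k (u + v) := fun i hi => by
  obtain ⟨h1, h2⟩ := hu i hi; obtain ⟨h3, h4⟩ := hv i hi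
  constructor <;> simp [h1, h2, h3, h4]

lemma suppK_Ev {k : ℕ} {j : Fin m} (hj : ¬ ((j:ℕ) < k)) : suppK m k (Ev m j) := by
  intro i hi
  have : i ≠ j := fun he => hj (he ▸ hi)
  constructor <;> simp [Ev, Pi.single_apply, this]
lemma suppK_Fv {k : ℕ} {j : Fin m} (hj : ¬ ((j:ℕ) < k)) : suppK m k (Fv m j) := by
  intro i hi
  have : i ≠ j := fun he => hj (he ▸ hi)
  constructor <;> simp [Fv, Pi.single_apply, this]

/-- a good move sequence for level `k` -/
def GoodTau (m : ℕ) (ε : ZMod 2) (k : ℕ) (τ : Equiv.Perm (Vm m)) : Prop :=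
  τ ∈ T m ε ∧ ∀ i : Fin m, (i : ℕ) < k →
    τ (Ev m i) = Ev m i ∧ τ (Fv m i) = Fv m i

lemma goodTau_one {ε : ZMod 2} {k : ℕ} : GoodTau m ε k 1 :=
  ⟨Subgroup.one_mem _, fun _ _ => ⟨rfl, rfl⟩⟩

lemma goodTau_mul {ε : ZMod 2} {k : ℕ} {σ τ : Equiv.Perm (Vm m)}
    (hσ : GoodTau m ε k σ) (hτ : GoodTau m ε k τ) : GoodTau m ε k (σ * τ) := by
  refine ⟨Subgroup.mul_mem _ hσ.1 hτ.1, fun i hi => ?_⟩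
  obtain ⟨h1, h2⟩ := hσ.2 i hi; obtain ⟨h3, h4⟩ := hτ.2 i hi
  constructor <;> simp [Equiv.Perm.mul_apply, h1, h2, h3, h4]

lemma goodTau_tperm (hm : 2 ≤ m) {ε : ZMod 2} {k : ℕ} {c : Vm m}
    (hc : c ≠ 0) (hsupp : suppK m k c) : GoodTau m ε k (tperm m c) := by
  refine ⟨tperm_mem_T hm ε c hc, fun i hi => ?_⟩
  obtain ⟨h1, h2⟩ := hsupp i hi
  constructor
  · rw [tperm_apply, tvec_apply_zero]
    rw [phi_comm, phi_Ev, h2]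
  · rw [tperm_apply, tvec_apply_zero]
    rw [phi_comm, phi_Fv, h1]

lemma exists_dual {k : ℕ} {u : Vm m} (hu : u ≠ 0) (hsupp : suppK m k u) :
    ∃ w : Vm m, suppK m k w ∧ phi m u w = 1 := by
  have hex : ∃ idx, u idx ≠ 0 := by
    by_contra h
    push_neg at h
    exact hu (funext fun idx => by simpa using h idx)
  obtain ⟨idx, hidx⟩ := hex
  have hone : u idx = 1 := (zmod2_cases (u idx)).resolve_left hidx
  rcases idx with j | j
  · refine ⟨Fv m j, suppK_Fv fun hj => ?_, by rw [phi_Fv, hone]⟩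
    rw [(hsupp j hj).1] at hone
    exact one_ne_zero hone.symm
  · refine ⟨Ev m j, suppK_Ev fun hj => ?_, by rw [phi_Ev, hone]⟩
    rw [(hsupp j hj).2] at hone
    exact one_ne_zero hone.symm

lemma moveA (hm : 2 ≤ m) (ε : ZMod 2) (k : ℕ) (u v : Vm m)
    (hu : u ≠ 0) (hv : v ≠ 0) (hsu : suppK m k u) (hsv : suppK m k v) :
    ∃ τ : Equiv.Perm (Vm m), GoodTau m ε k τ ∧ τ u = v := by
  rcases eq_or_ne u v with rfl | huv
  · exact ⟨1, goodTau_one, rfl⟩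
  rcases zmod2_cases (phi m u v) with hp | hp
  · -- need intermediate w
    obtain ⟨w1, hw1s, hw1⟩ := exists_dual hu hsu
    obtain ⟨w2, hw2s, hw2⟩ := exists_dual hv hsv
    have hkey : ∃ w : Vm m, suppK m k w ∧ phi m u w = 1 ∧ phi m v w = 1 := by
      rcases zmod2_cases (phi m v w1) with h1 | h1
      · rcases zmod2_cases (phi m u w2) with h2 | h2
        · refine ⟨w1 + w2, suppK_add hw1s hw2s, ?_, ?_⟩
          · rw [phi_add_right, hw1, h2, add_zero]
          · rw [phi_add_right, h1, hw2, zero_add]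
        · exact ⟨w2, hw2s, h2, hw2⟩
      · exact ⟨w1, hw1s, hw1, h1⟩
    obtain ⟨w, hws, hwu, hwv⟩ := hkey
    have huw : u ≠ w := phi_ne_of_eq hwu
    have hwv' : w ≠ v := fun he => by
      rw [he, phi_self] at hwv; exact one_ne_zero hwv.symm
    refine ⟨tperm m (w + v) * tperm m (u + w),
      goodTau_mul (goodTau_tperm hm (ne_add_ne_zero hwv') (suppK_add hws hsv))
        (goodTau_tperm hm (ne_add_ne_zero huw) (suppK_add hsu hws)), ?_⟩
    have s1 : tperm m (u + w) u = w := by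
      rw [tperm_apply, tvec_apply_one, ← add_assoc, add_self_vm, zero_add]
      rw [phi_add_right, phi_self, hwu, zero_add]
    have s2 : tperm m (w + v) w = v := by
      rw [tperm_apply, tvec_apply_one, ← add_assoc, add_self_vm, zero_add]
      rw [phi_add_right, phi_self, phi_comm, hwv, zero_add]
    rw [Equiv.Perm.mul_apply, s1, s2]
  · refine ⟨tperm m (u + v), goodTau_tperm hm (ne_add_ne_zero huv) (suppK_add hsu hsv), ?_⟩
    rw [tperm_apply, tvec_apply_one, ← add_assoc, add_self_vm, zero_add]
    rw [phi_add_right, phi_self, hp, zero_add]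

lemma phi_EvEv (w : Vm m) (i j : Fin m) : phi m (Ev m i) (Ev m j) = 0 := by
  rw [phi_Ev]; simp [Ev, Pi.single_apply]
lemma phi_FvFv (w : Vm m) (i j : Fin m) : phi m (Fv m i) (Fv m j) = 0 := by
  rw [phi_Fv]; simp [Fv, Pi.single_apply]

lemma moveB (hm : 2 ≤ m) (ε : ZMod 2) (k : Fin m) (v : Vm m)
    (hsv : suppK m (k : ℕ) v) (hp : phi m (Ev m k) v = 1) :
    ∃ τ : Equiv.Perm (Vm m), GoodTau m ε (k : ℕ) τ ∧
      τ (Ev m k) = Ev m k ∧ τ v = Fv m k := by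
  have hsek : suppK m (k : ℕ) (Ev m k) := suppK_Ev (lt_irrefl _)
  have hsfk : suppK m (k : ℕ) (Fv m k) := suppK_Fv (lt_irrefl _)
  have hef : phi m (Ev m k) (Fv m k) = 1 := by rw [phi_EvFv]; simp
  rcases eq_or_ne v (Fv m k) with rfl | hvf
  · exact ⟨1, goodTau_one, rfl, rfl⟩
  rcases zmod2_cases (phi m v (Fv m k)) with hq | hq
  · -- v + Ev k + Fv k route
    have hvef : v ≠ Ev m k + Fv m k := by
      intro he
      rw [he, phi_add_left, phi_self, hef, add_zero] at hq
      exact one_ne_zero hq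
    have hek0 : Ev m k ≠ (0 : Vm m) := by
      intro he
      have := congrFun he (Sum.inl k)
      simp [Ev] at this
    have hc1ne : v + (Ev m k + Fv m k) ≠ 0 := ne_add_ne_zero hvef
    have p1 : phi m (Ev m k) (v + (Ev m k + Fv m k)) = 0 := by
      rw [phi_add_right, phi_add_right, phi_self, hef, hp, zero_add]
      exact CharTwo.add_self_eq_zero _
    have s0 : tperm m (v + (Ev m k + Fv m k)) (Ev m k) = Ev m k := by
      rw [tperm_apply, tvec_apply_zero p1]
    have s0' : tperm m (Ev m k) (Ev m k) = Ev m k := by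
      rw [tperm_apply, tvec_apply_zero (phi_self _)]
    have p2 : phi m v (v + (Ev m k + Fv m k)) = 1 := by
      rw [phi_add_right, phi_self, zero_add, phi_add_right, phi_comm v (Ev m k), hp, hq, add_zero]
    have s1 : tperm m (v + (Ev m k + Fv m k)) v = Ev m k + Fv m k := by
      rw [tperm_apply, tvec_apply_one p2, ← add_assoc, add_self_vm, zero_add]
    have p3 : phi m (Ev m k + Fv m k) (Ev m k) = 1 := by
      rw [phi_add_left, phi_self, phi_comm, hef, zero_add]
    have s2 : tperm m (Ev m k) (Ev m k + Fv m k) = Fv m k := by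
      rw [tperm_apply, tvec_apply_one p3, add_comm (Ev m k) (Fv m k), add_assoc,
        add_self_vm, add_zero]
    refine ⟨tperm m (Ev m k) * tperm m (v + (Ev m k + Fv m k)),
      goodTau_mul (goodTau_tperm hm hek0 hsek)
        (goodTau_tperm hm hc1ne (suppK_add hsv (suppK_add hsek hsfk))), ?_, ?_⟩
    · rw [Equiv.Perm.mul_apply, s0, s0']
    · rw [Equiv.Perm.mul_apply, s1, s2]
  · -- direct transvection
    refine ⟨tperm m (v + Fv m k),
      goodTau_tperm hm (ne_add_ne_zero hvf) (suppK_add hsv hsfk), ?_, ?_⟩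
    · have p1 : phi m (Ev m k) (v + Fv m k) = 0 := by
        rw [phi_add_right, hp, hef]
        exact CharTwo.add_self_eq_zero _
      rw [tperm_apply, tvec_apply_zero p1]
    · have p2 : phi m v (v + Fv m k) = 1 := by
        rw [phi_add_right, phi_self, hq, zero_add]
      rw [tperm_apply, tvec_apply_one p2, ← add_assoc, add_self_vm, zero_add]

lemma fix_basis_eq_one {g : Equiv.Perm (Vm m)} (hg : g ∈ Sp m)
    (hfix : ∀ i : Fin m, g (Ev m i) = Ev m i ∧ g (Fv m i) = Fv m i) : g = 1 := by
  have hL : ∀ idx : Fin m ⊕ Fin m, g (Pi.single idx 1) = Pi.single idx 1 := by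
    rintro (i | i)
    · exact (hfix i).1
    · exact (hfix i).2
  have hrepr : ∀ u : Vm m, (∑ idx : Fin m ⊕ Fin m, u idx • Pi.single idx (1 : ZMod 2)) = u := by
    intro u
    have : ∀ idx : Fin m ⊕ Fin m, u idx • Pi.single idx (1 : ZMod 2)
        = (Pi.single idx (u idx) : Vm m) := by
      intro idx
      funext t
      rcases eq_or_ne t idx with rfl | ht
      · simp
      · simp [Pi.single_apply, ht.symm, Ne.symm ht]
    rw [Finset.sum_congr rfl fun idx _ => this idx]
    exact Finset.univ_sum_single u
  let L : Vm m →ₗ[ZMod 2] Vm m := IsLinearMap.mk' (fun u : Vm m => g u) hg.1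
  have hgL : ∀ w, g w = L w := fun w => rfl
  refine Equiv.ext fun u => ?_
  calc g u = L (∑ idx : Fin m ⊕ Fin m, u idx • Pi.single idx (1 : ZMod 2)) := by
        rw [hrepr, ← hgL]
    _ = ∑ idx : Fin m ⊕ Fin m, u idx • L (Pi.single idx (1 : ZMod 2)) := by
        rw [map_sum]
        exact Finset.sum_congr rfl fun idx _ => L.map_smul _ _
    _ = u := by
        have : ∀ idx : Fin m ⊕ Fin m, L (Pi.single idx (1 : ZMod 2)) = Pi.single idx 1 := by
          intro idx
          rw [← hgL]
          exact hL idx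
        rw [Finset.sum_congr rfl fun idx _ => by rw [this idx]]
        exact hrepr u

lemma Ev_ne_zero (k : Fin m) : Ev m k ≠ 0 := by
  intro he
  have := congrFun he (Sum.inl k)
  simp [Ev] at this
lemma Fv_ne_zero (k : Fin m) : Fv m k ≠ 0 := by
  intro he
  have := congrFun he (Sum.inr k)
  simp [Fv] at this

lemma coord_inl_eq_phi (w : Vm m) (i : Fin m) : w (Sum.inl i) = phi m w (Fv m i) :=
  (phi_Fv w i).symm
lemma coord_inr_eq_phi (w : Vm m) (i : Fin m) : w (Sum.inr i) = phi m w (Ev m i) :=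
  (phi_Ev w i).symm

lemma Qlem (hm : 2 ≤ m) (ε : ZMod 2) (j : ℕ) :
    ∀ g ∈ Sp m, (∀ i : Fin m, (i : ℕ) < m - j →
      g (Ev m i) = Ev m i ∧ g (Fv m i) = Fv m i) → g ∈ T m ε := by
  induction j with
  | zero =>
    intro g hg hfix
    have : g = 1 := fix_basis_eq_one hg fun i => hfix i (by omega)
    rw [this]
    exact Subgroup.one_mem _
  | succ j ih =>
    intro g hg hfix
    by_cases hjm : m ≤ j
    · exact ih g hg fun i hi => absurd hi (by omega)
    push_neg at hjm
    set kn : ℕ := m - (j + 1) with hkn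
    have hknm : kn < m := by omega
    set k : Fin m := ⟨kn, hknm⟩ with hk
    have hkval : (k : ℕ) = kn := rfl
    have hfixk : ∀ i : Fin m, (i : ℕ) < kn →
        g (Ev m i) = Ev m i ∧ g (Fv m i) = Fv m i := fun i hi => hfix i hi
    set u : Vm m := g (Ev m k) with hu
    set v0 : Vm m := g (Fv m k) with hv0
    have hu0 : u ≠ 0 := by
      intro h
      exact Ev_ne_zero k (g.injective (h.trans (sp_map_zero hg).symm))
    have hv00 : v0 ≠ 0 := by
      intro h
      exact Fv_ne_zero k (g.injective (h.trans (sp_map_zero hg).symm))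
    have hikne : ∀ i : Fin m, (i : ℕ) < kn → (k ≠ i) := by
      intro i hi he
      rw [← he] at hi
      exact lt_irrefl _ hi
    have hsu : suppK m kn u := by
      intro i hi
      constructor
      · rw [coord_inl_eq_phi u i, ← (hfixk i hi).2, hu, hg.2, phi_EvFv, if_neg (hikne i hi)]
      · rw [coord_inr_eq_phi u i, ← (hfixk i hi).1, hu, hg.2, phi_EvEv u]
    have hsv0 : suppK m kn v0 := by
      intro i hi
      constructor
      · rw [coord_inl_eq_phi v0 i, ← (hfixk i hi).2, hv0, hg.2]
        exact phi_FvFv v0 k i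
      · rw [coord_inr_eq_phi v0 i, ← (hfixk i hi).1, hv0, hg.2, phi_Ev]
        simp only [Fv, Pi.single_apply]
        rw [if_neg]
        intro he
        exact hikne i hi (Sum.inr_injective he).symm
    obtain ⟨τ₁, hτ₁good, hτ₁u⟩ := moveA hm ε kn u (Ev m k) hu0 (Ev_ne_zero k) hsu
      (suppK_Ev (by rw [hkval]; exact lt_irrefl _))
    have hτ₁Sp : τ₁ ∈ Sp m := T_le_Sp ε hτ₁good.1
    set v1 : Vm m := τ₁ v0 with hv1
    have hp : phi m (Ev m k) v1 = 1 := by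
      rw [hv1, ← hτ₁u, hτ₁Sp.2, hu, hv0, hg.2, phi_EvFv, if_pos rfl]
    have hsv1 : suppK m kn v1 := by
      intro i hi
      have hE := (hτ₁good.2 i hi).1
      have hF := (hτ₁good.2 i hi).2
      constructor
      · rw [coord_inl_eq_phi v1 i, hv1, ← hF, hτ₁Sp.2, ← coord_inl_eq_phi v0 i]
        exact (hsv0 i hi).1
      · rw [coord_inr_eq_phi v1 i, hv1, ← hE, hτ₁Sp.2, ← coord_inr_eq_phi v0 i]
        exact (hsv0 i hi).2
    obtain ⟨τ₂, hτ₂good, hτ₂e, hτ₂v⟩ := moveB hm ε k v1 (by rw [hkval]; exact hsv1) hp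
    have hτ₂Sp : τ₂ ∈ Sp m := T_le_Sp ε hτ₂good.1
    set g' : Equiv.Perm (Vm m) := τ₂ * (τ₁ * g) with hg'
    have hg'Sp : g' ∈ Sp m := Subgroup.mul_mem _ hτ₂Sp (Subgroup.mul_mem _ hτ₁Sp hg)
    have hfix' : ∀ i : Fin m, (i : ℕ) < m - j →
        g' (Ev m i) = Ev m i ∧ g' (Fv m i) = Fv m i := by
      intro i hi
      have hmj : m - j = kn + 1 := by omega
      rw [hmj] at hi
      rcases Nat.lt_or_ge (i : ℕ) kn with hlt | hge
      · have h1 := hfixk i hlt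
        have h2 := hτ₁good.2 i hlt
        have h3 := (hτ₂good.2 i (by rw [hkval]; exact hlt))
        constructor <;>
          simp [hg', Equiv.Perm.mul_apply, h1.1, h1.2, h2.1, h2.2, h3.1, h3.2]
      · have hik : i = k := by
          apply Fin.ext
          rw [hkval]
          omega
        subst hik
        constructor
        · rw [hg', Equiv.Perm.mul_apply, Equiv.Perm.mul_apply, ← hu, hτ₁u, hτ₂e]
        · rw [hg', Equiv.Perm.mul_apply, Equiv.Perm.mul_apply, ← hv0, ← hv1, hτ₂v]
    have hg'T : g' ∈ T m ε := ih g' hg'Sp hfix'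
    have : g = τ₁⁻¹ * (τ₂⁻¹ * g') := by
      rw [hg']
      group
    rw [this]
    exact Subgroup.mul_mem _ (Subgroup.inv_mem _ hτ₁good.1)
      (Subgroup.mul_mem _ (Subgroup.inv_mem _ hτ₂good.1) hg'T)


theorem stmt_9 (m : ℕ) (hm : 3 ≤ m) (ε : ZMod 2) :
    (Subgroup.closure {g : Equiv.Perm (Vm m) |
        ∃ a b : Vm m, a ≠ b ∧ theta0 m a = ε ∧ theta0 m b = ε ∧
          ∀ u : Vm m, g u = tvec m (a + b) u} : Set (Equiv.Perm (Vm m))) =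
      {g : Equiv.Perm (Vm m) |
        IsLinearMap (ZMod 2) (fun u : Vm m => g u) ∧
        ∀ u v : Vm m, phi m (g u) (g v) = phi m u v} := by
  have h2 : 2 ≤ m := by omega
  have hTS : T m ε = Sp m :=
    le_antisymm (T_le_Sp ε) (fun g hg => Qlem h2 ε m g hg fun i hi => absurd hi (by omega))
  exact congrArg (fun H : Subgroup (Equiv.Perm (Vm m)) =>
    (H : Set (Equiv.Perm (Vm m)))) hTS
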